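/- If E[Y(0) | D*, D] = E[Y(0) | D*] and E[Y(0) | D*] = E[Y(0) | D*_g] (where D*_g is a sub-sigma-algebra/component of D*), and D*_g is conditionally independent of D_{-g} given D_g, then E[Y(0) | D] = E[Y(0) | D_g]. -/

import Mathlib

open MeasureTheory ProbabilityTheory

section Aux

variable {Ω : Type*}

/-- The π-system of intersections of sets from two σ-algebras. -/
private def interSets (m₁ m₂ : MeasurableSpace Ω) : Set (Set Ω) :=
  {u | ∃ a b, MeasurableSet[m₁] a ∧ MeasurableSet[m₂] b ∧ u = a ∩ b}

private lemma isPiSystem_interSets (m₁ m₂ : MeasurableSpace Ω) :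
    IsPiSystem (interSets m₁ m₂) := by
  rintro _ ⟨a₁, b₁, ha₁, hb₁, rfl⟩ _ ⟨a₂, b₂, ha₂, hb₂, rfl⟩ _
  exact ⟨a₁ ∩ a₂, b₁ ∩ b₂, ha₁.inter ha₂, hb₁.inter hb₂, by ext x; simp; tauto⟩

private lemma sup_eq_generateFrom_interSets (m₁ m₂ : MeasurableSpace Ω) :
    m₁ ⊔ m₂ = MeasurableSpace.generateFrom (interSets m₁ m₂) := by
  refine le_antisymm (sup_le ?_ ?_) (MeasurableSpace.generateFrom_le ?_)
  · exact fun s hs => MeasurableSpace.measurableSet_generateFrom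
      ⟨s, Set.univ, hs, MeasurableSet.univ, (Set.inter_univ s).symm⟩
  · exact fun s hs => MeasurableSpace.measurableSet_generateFrom
      ⟨Set.univ, s, MeasurableSet.univ, hs, (Set.univ_inter s).symm⟩
  · rintro _ ⟨a, b, ha, hb, rfl⟩
    exact ((le_sup_left : m₁ ≤ m₁ ⊔ m₂) _ ha).inter ((le_sup_right : m₂ ≤ m₁ ⊔ m₂) _ hb)

/-- Two integrable functions with equal total integral and equal integrals over sets `a ∩ b`
with `a ∈ m₁`, `b ∈ m₂` have equal integrals over every `m₁ ⊔ m₂`-measurable set. -/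
private lemma setIntegral_eq_of_basic {m₁ m₂ : MeasurableSpace Ω}
    {mΩ : MeasurableSpace Ω} {μ : Measure Ω}
    (h₁ : m₁ ≤ mΩ) (h₂ : m₂ ≤ mΩ) {f g : Ω → ℝ} (hf : Integrable f μ) (hg : Integrable g μ)
    (htot : ∫ x, f x ∂μ = ∫ x, g x ∂μ)
    (hbasic : ∀ a b, MeasurableSet[m₁] a → MeasurableSet[m₂] b →
      ∫ x in a ∩ b, f x ∂μ = ∫ x in a ∩ b, g x ∂μ) :
    ∀ s, MeasurableSet[m₁ ⊔ m₂] s → ∫ x in s, f x ∂μ = ∫ x in s, g x ∂μ := by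
  intro s hs
  have hle : m₁ ⊔ m₂ ≤ mΩ := sup_le h₁ h₂
  refine MeasurableSpace.induction_on_inter (m := m₁ ⊔ m₂)
    (C := fun t _ => ∫ x in t, f x ∂μ = ∫ x in t, g x ∂μ)
    (sup_eq_generateFrom_interSets m₁ m₂) (isPiSystem_interSets m₁ m₂) (by simp) ?_ ?_ ?_ s hs
  · rintro t ⟨a, b, ha, hb, rfl⟩
    exact hbasic a b ha hb
  · intro t ht h
    rw [setIntegral_compl (μ := μ) (hle _ ht) hf, setIntegral_compl (μ := μ) (hle _ ht) hg, htot, h]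
  · intro t hdisj htm h
    rw [integral_iUnion (μ := μ) (fun i => hle _ (htm i)) hdisj hf.integrableOn,
        integral_iUnion (μ := μ) (fun i => hle _ (htm i)) hdisj hg.integrableOn]
    exact tsum_congr h

private lemma condexp_indicator_bound {m' : MeasurableSpace Ω}
    {mΩ : MeasurableSpace Ω} {μ : Measure Ω} [IsProbabilityMeasure μ]
    (hm' : m' ≤ mΩ) {b : Set Ω}
    (hb : MeasurableSet[mΩ] b) :
    ∀ᵐ x ∂μ, ‖(μ[b.indicator (fun _ => (1:ℝ)) | m']) x‖ ≤ 1 := by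
  have hind : Integrable (b.indicator (fun _ => (1:ℝ))) μ := (integrable_const 1).indicator hb
  have h0 : (0 : Ω → ℝ) ≤ᵐ[μ] μ[b.indicator (fun _ => (1:ℝ)) | m'] :=
    condExp_nonneg (Filter.Eventually.of_forall fun x =>
      Set.indicator_nonneg (fun _ _ => zero_le_one) x)
  have h1 : μ[b.indicator (fun _ => (1:ℝ)) | m'] ≤ᵐ[μ] μ[(fun _ => (1:ℝ)) | m'] :=
    condExp_mono hind (integrable_const (1:ℝ))
      (Filter.Eventually.of_forall fun x => by
        by_cases hx : x ∈ b <;> simp [hx])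
  have hc : μ[(fun _ => (1:ℝ)) | m'] = fun _ => (1:ℝ) := condExp_const (μ := μ) hm' (1:ℝ)
  filter_upwards [h0, h1] with x hx0 hx1
  simp only [Pi.zero_apply] at hx0
  rw [Real.norm_eq_abs, abs_le]
  refine ⟨by linarith, ?_⟩
  calc (μ[b.indicator (fun _ => (1:ℝ)) | m']) x ≤ (μ[(fun _ => (1:ℝ)) | m']) x := hx1
    _ = 1 := congrFun hc x

/-- If `m₁ ⟂ m₂ | m'`, then for `b ∈ m₂`, `μ⟦b | m' ⊔ m₁⟧ = μ⟦b | m'⟧`. -/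
private lemma condexp_indicator_sup_left {m' m₁ m₂ : MeasurableSpace Ω}
    {mΩ : MeasurableSpace Ω} [StandardBorelSpace Ω] {μ : Measure Ω} [IsProbabilityMeasure μ]
    (hm' : m' ≤ mΩ) (hm₁ : m₁ ≤ mΩ) (hm₂ : m₂ ≤ mΩ)
    (h : CondIndep m' m₁ m₂ hm' μ) {b : Set Ω} (hb : MeasurableSet[m₂] b) :
    μ[b.indicator (fun _ => (1:ℝ)) | m' ⊔ m₁] =ᵐ[μ] μ[b.indicator (fun _ => (1:ℝ)) | m'] := by
  have hsup : m' ⊔ m₁ ≤ mΩ := sup_le hm' hm₁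
  have hbΩ : MeasurableSet[mΩ] b := hm₂ _ hb
  have hind : Integrable (b.indicator (fun _ => (1:ℝ))) μ := (integrable_const 1).indicator hbΩ
  have hcond := (condIndep_iff m' m₁ m₂ hm' hm₁ hm₂ μ).mp h
  refine (ae_eq_condExp_of_forall_setIntegral_eq hsup hind
    (fun s _ _ => integrable_condExp.integrableOn)
    (fun s hs _ => ?_) (StronglyMeasurable.aestronglyMeasurable (stronglyMeasurable_condExp.mono le_sup_left))).symm
  refine setIntegral_eq_of_basic hm' hm₁ integrable_condExp hind (integral_condExp hm') ?_ s hs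
  intro a t ha ht
  set q : Ω → ℝ := μ[b.indicator (fun _ => (1:ℝ)) | m'] with hq
  have haΩ : MeasurableSet[mΩ] a := hm' _ ha
  have htΩ : MeasurableSet[mΩ] t := hm₁ _ ht
  have hindt : Integrable (t.indicator (fun _ => (1:ℝ))) μ := (integrable_const 1).indicator htΩ
  have hmul : q * t.indicator (fun _ => (1:ℝ)) = t.indicator q := by
    ext x; by_cases hx : x ∈ t <;> simp [hx]
  have hqt_int : Integrable (q * t.indicator (fun _ => (1:ℝ))) μ := by
    rw [hmul]; exact integrable_condExp.indicator htΩ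
  -- LHS computation
  have lhs1 : ∫ x in a ∩ t, q x ∂μ = ∫ x in a, (q * t.indicator (fun _ => (1:ℝ))) x ∂μ := by
    rw [hmul, setIntegral_indicator (μ := μ) htΩ, Set.inter_comm a t]
  have lhs2 : ∫ x in a, (q * t.indicator (fun _ => (1:ℝ))) x ∂μ
      = ∫ x in a, (μ[q * t.indicator (fun _ => (1:ℝ)) | m']) x ∂μ :=
    (setIntegral_condExp hm' hqt_int ha).symm
  have hpull : μ[q * t.indicator (fun _ => (1:ℝ)) | m']
      =ᵐ[μ] q * μ[t.indicator (fun _ => (1:ℝ)) | m'] :=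
    condExp_mul_of_stronglyMeasurable_left stronglyMeasurable_condExp hqt_int hindt
  have hci : μ[(t ∩ b).indicator (fun _ => (1:ℝ)) | m']
      =ᵐ[μ] μ[t.indicator (fun _ => (1:ℝ)) | m'] * q := hcond t b ht hb
  have hpull' : μ[q * t.indicator (fun _ => (1:ℝ)) | m']
      =ᵐ[μ] μ[(t ∩ b).indicator (fun _ => (1:ℝ)) | m'] := by
    filter_upwards [hpull, hci] with x hx1 hx2
    rw [hx1, hx2]; simp [mul_comm]
  have lhs3 : ∫ x in a, (μ[q * t.indicator (fun _ => (1:ℝ)) | m']) x ∂μ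
      = ∫ x in a, (μ[(t ∩ b).indicator (fun _ => (1:ℝ)) | m']) x ∂μ :=
    integral_congr_ae (ae_restrict_of_ae hpull')
  have lhs4 : ∫ x in a, (μ[(t ∩ b).indicator (fun _ => (1:ℝ)) | m']) x ∂μ
      = ∫ x in a, (t ∩ b).indicator (fun _ => (1:ℝ)) x ∂μ :=
    setIntegral_condExp hm' ((integrable_const 1).indicator (htΩ.inter hbΩ)) ha
  have lhs5 : ∫ x in a, (t ∩ b).indicator (fun _ => (1:ℝ)) x ∂μ = (μ (t ∩ b ∩ a)).toReal := by
    rw [setIntegral_indicator (μ := μ) (htΩ.inter hbΩ)]; simp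
    congr 1; ext x; simp only [Set.mem_inter_iff]; tauto
  -- RHS computation
  have rhs1 : ∫ x in a ∩ t, b.indicator (fun _ => (1:ℝ)) x ∂μ = (μ (b ∩ (a ∩ t))).toReal := by
    rw [setIntegral_indicator (μ := μ) hbΩ]; simp
    congr 1; ext x; simp only [Set.mem_inter_iff]; tauto
  have hset : t ∩ b ∩ a = b ∩ (a ∩ t) := by ext x; simp only [Set.mem_inter_iff]; tauto
  rw [lhs1, lhs2, lhs3, lhs4, lhs5, rhs1, hset]

/-- Conditional pull-out: for `Z` `m₁`-measurable and `b ∈ m₂`,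
`E[1_b • Z | m'] = μ⟦b|m'⟧ * E[Z|m']`. -/
private lemma condexp_indicator_mul {m' m₁ m₂ : MeasurableSpace Ω}
    {mΩ : MeasurableSpace Ω} [StandardBorelSpace Ω] {μ : Measure Ω} [IsProbabilityMeasure μ]
    (hm' : m' ≤ mΩ) (hm₁ : m₁ ≤ mΩ) (hm₂ : m₂ ≤ mΩ)
    (h : CondIndep m' m₁ m₂ hm' μ) {Z : Ω → ℝ} (hZ : Integrable Z μ)
    (hZm : StronglyMeasurable[m₁] Z) {b : Set Ω} (hb : MeasurableSet[m₂] b) :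
    μ[b.indicator Z | m'] =ᵐ[μ] μ[b.indicator (fun _ => (1:ℝ)) | m'] * μ[Z | m'] := by
  have hsup : m' ⊔ m₁ ≤ mΩ := sup_le hm' hm₁
  have hbΩ : MeasurableSet[mΩ] b := hm₂ _ hb
  have hind : Integrable (b.indicator (fun _ => (1:ℝ))) μ := (integrable_const 1).indicator hbΩ
  have hiZ : Integrable (b.indicator Z) μ := hZ.indicator hbΩ
  have hmul : Z * b.indicator (fun _ => (1:ℝ)) = b.indicator Z := by
    ext x; by_cases hx : x ∈ b <;> simp [hx]
  have step1 : μ[b.indicator Z | m'] =ᵐ[μ] μ[μ[b.indicator Z | m' ⊔ m₁] | m'] :=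
    (condExp_condExp_of_le le_sup_left hsup).symm
  have step2 : μ[b.indicator Z | m' ⊔ m₁]
      =ᵐ[μ] Z * μ[b.indicator (fun _ => (1:ℝ)) | m' ⊔ m₁] := by
    rw [← hmul]
    exact condExp_mul_of_stronglyMeasurable_left (hZm.mono le_sup_right) (hmul ▸ hiZ) hind
  have step3 : Z * μ[b.indicator (fun _ => (1:ℝ)) | m' ⊔ m₁]
      =ᵐ[μ] μ[b.indicator (fun _ => (1:ℝ)) | m'] * Z := by
    filter_upwards [condexp_indicator_sup_left hm' hm₁ hm₂ h hb] with x hx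
    simp only [Pi.mul_apply]
    rw [hx, mul_comm]
  have step4 : μ[μ[b.indicator Z | m' ⊔ m₁] | m']
      =ᵐ[μ] μ[μ[b.indicator (fun _ => (1:ℝ)) | m'] * Z | m'] :=
    condExp_congr_ae (step2.trans step3)
  have step5 : μ[μ[b.indicator (fun _ => (1:ℝ)) | m'] * Z | m']
      =ᵐ[μ] μ[b.indicator (fun _ => (1:ℝ)) | m'] * μ[Z | m'] :=
    condExp_stronglyMeasurable_mul_of_bound hm' stronglyMeasurable_condExp hZ 1
      (condexp_indicator_bound hm' hbΩ)
  exact step1.trans (step4.trans step5)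

/-- Key lemma: if `m₁ ⟂ m₂ | m'`, `Z` integrable and `m₁`-measurable, then
`E[Z | m' ⊔ m₂] = E[Z | m']`. -/
private lemma condexp_sup_right_of_condIndep {m' m₁ m₂ : MeasurableSpace Ω}
    {mΩ : MeasurableSpace Ω} [StandardBorelSpace Ω] {μ : Measure Ω} [IsProbabilityMeasure μ]
    (hm' : m' ≤ mΩ) (hm₁ : m₁ ≤ mΩ) (hm₂ : m₂ ≤ mΩ)
    (h : CondIndep m' m₁ m₂ hm' μ) {Z : Ω → ℝ} (hZ : Integrable Z μ)
    (hZm : StronglyMeasurable[m₁] Z) :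
    μ[Z | m' ⊔ m₂] =ᵐ[μ] μ[Z | m'] := by
  refine (ae_eq_condExp_of_forall_setIntegral_eq (sup_le hm' hm₂) hZ
    (fun s _ _ => integrable_condExp.integrableOn)
    (fun s hs _ => ?_) (StronglyMeasurable.aestronglyMeasurable (stronglyMeasurable_condExp.mono le_sup_left))).symm
  refine setIntegral_eq_of_basic hm' hm₂ integrable_condExp hZ (integral_condExp hm') ?_ s hs
  intro a b ha hb
  set G : Ω → ℝ := μ[Z | m'] with hG
  have haΩ : MeasurableSet[mΩ] a := hm' _ ha
  have hbΩ : MeasurableSet[mΩ] b := hm₂ _ hb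
  have hind : Integrable (b.indicator (fun _ => (1:ℝ))) μ := (integrable_const 1).indicator hbΩ
  have hmulG : G * b.indicator (fun _ => (1:ℝ)) = b.indicator G := by
    ext x; by_cases hx : x ∈ b <;> simp [hx]
  have hGb_int : Integrable (G * b.indicator (fun _ => (1:ℝ))) μ := by
    rw [hmulG]; exact integrable_condExp.indicator hbΩ
  -- LHS
  have lhs1 : ∫ x in a ∩ b, G x ∂μ = ∫ x in a, (G * b.indicator (fun _ => (1:ℝ))) x ∂μ := by
    rw [hmulG, setIntegral_indicator (μ := μ) hbΩ, Set.inter_comm a b]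
  have lhs2 : ∫ x in a, (G * b.indicator (fun _ => (1:ℝ))) x ∂μ
      = ∫ x in a, (μ[G * b.indicator (fun _ => (1:ℝ)) | m']) x ∂μ :=
    (setIntegral_condExp hm' hGb_int ha).symm
  have hpull : μ[G * b.indicator (fun _ => (1:ℝ)) | m']
      =ᵐ[μ] G * μ[b.indicator (fun _ => (1:ℝ)) | m'] :=
    condExp_mul_of_stronglyMeasurable_left stronglyMeasurable_condExp hGb_int hind
  -- RHS
  have rhs1 : ∫ x in a ∩ b, Z x ∂μ = ∫ x in a, b.indicator Z x ∂μ := by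
    rw [setIntegral_indicator (μ := μ) hbΩ, Set.inter_comm a b]
  have rhs2 : ∫ x in a, b.indicator Z x ∂μ = ∫ x in a, (μ[b.indicator Z | m']) x ∂μ :=
    (setIntegral_condExp hm' (hZ.indicator hbΩ) ha).symm
  have hkey : μ[b.indicator Z | m'] =ᵐ[μ] μ[b.indicator (fun _ => (1:ℝ)) | m'] * G :=
    condexp_indicator_mul hm' hm₁ hm₂ h hZ hZm hb
  have hsame : μ[G * b.indicator (fun _ => (1:ℝ)) | m'] =ᵐ[μ] μ[b.indicator Z | m'] := by
    filter_upwards [hpull, hkey] with x hx1 hx2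
    rw [hx1, hx2]; simp [mul_comm]
  rw [lhs1, lhs2, rhs1, rhs2]
  exact integral_congr_ae (ae_restrict_of_ae hsame)

end Aux

/-- If `E[Y(0) | D*, D] = E[Y(0) | D*]` (nondifferential misclassification),
`E[Y(0) | D*] = E[Y(0) | D*_g]` (mean independence w.r.t. true status), and `D*_g` is
conditionally independent of `D_{-g}` given `D_g`, then `E[Y(0) | D] = E[Y(0) | D_g]`.
Here the information sets are modeled as sub-σ-algebras: `mDstar` (generated by the true
statuses `D*`), `mDstarG ≤ mDstar` (generated by `D*_g`), `mDg` and `mDminusG` (generated by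
the observed `D_g` and `D_{-g}` respectively), with `mD = mDg ⊔ mDminusG` the observed
information. -/
theorem mean_independence_observed_status
    {Ω : Type*} {mΩ : MeasurableSpace Ω} [StandardBorelSpace Ω]
    (μ : Measure Ω) [IsProbabilityMeasure μ]
    (Y : Ω → ℝ) (hY : Integrable Y μ)
    (mDstar mDstarG mDg mDminusG : MeasurableSpace Ω)
    (hDstar : mDstar ≤ mΩ) (hDstarG : mDstarG ≤ mDstar)
    (hDg : mDg ≤ mΩ) (hDminusG : mDminusG ≤ mΩ)
    -- (i) nondifferential misclassification: E[Y(0) | D*, D] = E[Y(0) | D*]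
    (h_nondiff : μ[Y | mDstar ⊔ (mDg ⊔ mDminusG)] =ᵐ[μ] μ[Y | mDstar])
    -- (ii) mean independence with respect to the true status: E[Y(0) | D*] = E[Y(0) | D*_g]
    (h_meanind : μ[Y | mDstar] =ᵐ[μ] μ[Y | mDstarG])
    -- (iii) conditional independence: D*_g ⟂ D_{-g} | D_g
    (h_condind : CondIndep mDg mDstarG mDminusG hDg μ) :
    μ[Y | mDg ⊔ mDminusG] =ᵐ[μ] μ[Y | mDg] := by
  have hmD : mDg ⊔ mDminusG ≤ mΩ := sup_le hDg hDminusG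
  have hmG : mDstarG ≤ mΩ := hDstarG.trans hDstar
  set Z : Ω → ℝ := μ[Y | mDstarG] with hZdef
  have hZint : Integrable Z μ := integrable_condExp
  have hZm : StronglyMeasurable[mDstarG] Z := stronglyMeasurable_condExp
  -- Step 1: E[Y|D] = E[Z|D]
  have h1 : μ[Y | mDg ⊔ mDminusG] =ᵐ[μ] μ[Z | mDg ⊔ mDminusG] := by
    have tower : μ[μ[Y | mDstar ⊔ (mDg ⊔ mDminusG)] | mDg ⊔ mDminusG]
        =ᵐ[μ] μ[Y | mDg ⊔ mDminusG] :=
      condExp_condExp_of_le le_sup_right (sup_le hDstar hmD)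
    have congr1 : μ[μ[Y | mDstar ⊔ (mDg ⊔ mDminusG)] | mDg ⊔ mDminusG]
        =ᵐ[μ] μ[Z | mDg ⊔ mDminusG] :=
      condExp_congr_ae (h_nondiff.trans h_meanind)
    exact tower.symm.trans congr1
  -- Step 2: E[Z|D] = E[Z|D_g] by conditional independence
  have h2 : μ[Z | mDg ⊔ mDminusG] =ᵐ[μ] μ[Z | mDg] :=
    condexp_sup_right_of_condIndep hDg hmG hDminusG h_condind hZint hZm
  -- Step 3: E[Y|D_g] = E[Z|D_g]
  have h3 : μ[Y | mDg] =ᵐ[μ] μ[Z | mDg] := by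
    have tower : μ[μ[Y | mDg ⊔ mDminusG] | mDg] =ᵐ[μ] μ[Y | mDg] :=
      condExp_condExp_of_le le_sup_left hmD
    have congr2 : μ[μ[Y | mDg ⊔ mDminusG] | mDg] =ᵐ[μ] μ[μ[Z | mDg] | mDg] :=
      condExp_congr_ae (h1.trans h2)
    have idem : μ[μ[Z | mDg] | mDg] =ᵐ[μ] μ[Z | mDg] :=
      condExp_condExp_of_le le_rfl hDg
    exact tower.symm.trans (congr2.trans idem)
  exact (h1.trans h2).trans h3.symm
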